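/- Let P ⊆ ℝ^n be a nonempty compact polytope containing more than one point, let w ∈ ℝ^n, and let x* be a point of P maximizing wᵀ·x over P. Define c(P,w) = inf{ wᵀ·(x*−x)/‖x*−x‖_1 : x ∈ P, x ≠ x* }. Then c(P,w) ≥ 0, and c(P,w) > 0 if and only if x* is the unique maximizer of wᵀ·x over P. -/
import Mathlib


/-- **Properties of the parameter `c(P,w)`** (Definition A.1): for a compact polytope `P`
(the convex hull of a finite set) with more than one point and a maximizer `x*` of `wᵀ·x`
over `P`, the quantity `c(P,w) = inf{ wᵀ·(x*−x)/‖x*−x‖₁ : x ∈ P, x ≠ x* }` is nonnegative,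
and it is positive if and only if `x*` is the unique maximizer. -/
theorem cPw_nonneg_and_pos_iff_unique (N : ℕ) (S : Finset (Fin N → ℝ)) (w : Fin N → ℝ)
    (P : Set (Fin N → ℝ)) (hP : P = convexHull ℝ (S : Set (Fin N → ℝ)))
    (hPne : P.Nonempty) (hPnt : ∃ a ∈ P, ∃ b ∈ P, a ≠ b)
    (xstar : Fin N → ℝ) (hx : xstar ∈ P)
    (hmax : ∀ y ∈ P, (∑ i, w i * y i) ≤ ∑ i, w i * xstar i) :
    letI cPw : ℝ := sInf {c : ℝ | ∃ x ∈ P, x ≠ xstar ∧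
      c = (∑ i, w i * (xstar i - x i)) / (∑ i, |xstar i - x i|)}
    0 ≤ cPw ∧
    (0 < cPw ↔ ∀ y ∈ P, (∑ i, w i * y i) = (∑ i, w i * xstar i) → y = xstar) := by
  set num : (Fin N → ℝ) → ℝ := fun x => ∑ i, w i * (xstar i - x i) with hnumdef
  set den : (Fin N → ℝ) → ℝ := fun x => ∑ i, |xstar i - x i| with hdendef
  set A : Set ℝ := {c : ℝ | ∃ x ∈ P, x ≠ xstar ∧ c = num x / den x} with hAdef
  show 0 ≤ sInf A ∧ _
  have hSP : (S : Set (Fin N → ℝ)) ⊆ P := by rw [hP]; exact subset_convexHull ℝ _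
  have hnum_eq : ∀ x : Fin N → ℝ, num x = (∑ i, w i * xstar i) - ∑ i, w i * x i := by
    intro x
    simp only [hnumdef, mul_sub, Finset.sum_sub_distrib]
  have hnum_nonneg : ∀ x ∈ P, 0 ≤ num x := by
    intro x hxP
    have := hmax x hxP
    rw [hnum_eq]; linarith
  have hden_pos : ∀ x : Fin N → ℝ, x ≠ xstar → 0 < den x := by
    intro x hne
    obtain ⟨i, hi⟩ := Function.ne_iff.mp hne
    exact Finset.sum_pos' (fun j _ => abs_nonneg _)
      ⟨i, Finset.mem_univ i, abs_pos.mpr (sub_ne_zero.mpr (Ne.symm hi))⟩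
  have hz : ∃ z ∈ P, z ≠ xstar := by
    obtain ⟨a, ha, b, hb, hab⟩ := hPnt
    by_cases h : a = xstar
    · exact ⟨b, hb, by rw [← h]; exact (Ne.symm hab)⟩
    · exact ⟨a, ha, h⟩
  obtain ⟨z, hzP, hzne⟩ := hz
  have hAne : A.Nonempty := ⟨num z / den z, z, hzP, hzne, rfl⟩
  have hA_nonneg : ∀ c ∈ A, (0:ℝ) ≤ c := by
    rintro c ⟨x, hxP, hxne, rfl⟩
    exact div_nonneg (hnum_nonneg x hxP) (hden_pos x hxne).le
  have hBdd : BddBelow A := ⟨0, hA_nonneg⟩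
  have h0le : 0 ≤ sInf A := le_csInf hAne hA_nonneg
  refine ⟨h0le, ?_, ?_⟩
  · -- positivity implies uniqueness
    intro hpos y hyP heq
    by_contra hne
    have hnum0 : num y = 0 := by rw [hnum_eq]; linarith
    have h0A : (0:ℝ) ∈ A := ⟨y, hyP, hne, by rw [hnum0, zero_div]⟩
    have := csInf_le hBdd h0A
    linarith
  · -- uniqueness implies positivity
    intro huniq
    -- T : vertices different from xstar
    have hTne : ∃ v ∈ S, v ≠ xstar := by
      by_contra hcon
      push_neg at hcon
      have hsub : (S : Set (Fin N → ℝ)) ⊆ {xstar} := by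
        intro v hv; exact hcon v hv
      have : P ⊆ {xstar} := by
        rw [hP]; exact convexHull_min hsub (convex_singleton xstar)
      exact hzne (this hzP)
    obtain ⟨v₀, hv₀S, hv₀ne⟩ := hTne
    set T : Finset (Fin N → ℝ) := S.filter (fun v => v ≠ xstar) with hTdef
    have hT : T.Nonempty := ⟨v₀, Finset.mem_filter.mpr ⟨hv₀S, hv₀ne⟩⟩
    set c₀ : ℝ := T.inf' hT (fun v => num v / den v) with hc₀def
    have hnum_pos : ∀ v ∈ T, 0 < num v := by
      intro v hvT
      obtain ⟨hvS, hvne⟩ := Finset.mem_filter.mp hvT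
      have hvP : v ∈ P := hSP hvS
      rcases lt_or_eq_of_le (hnum_nonneg v hvP) with h | h
      · exact h
      · exfalso
        apply hvne
        apply huniq v hvP
        have := hnum_eq v
        rw [← h] at this
        linarith
    have hc₀pos : 0 < c₀ := by
      rw [hc₀def, Finset.lt_inf'_iff]
      intro v hvT
      exact div_pos (hnum_pos v hvT)
        (hden_pos v (Finset.mem_filter.mp hvT).2)
    -- key property on vertices
    have keyS : ∀ v ∈ (S : Set (Fin N → ℝ)), c₀ * den v ≤ num v := by
      intro v hvS
      by_cases hv : v = xstar
      · subst hv
        simp [hnumdef, hdendef]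
      · have hvT : v ∈ T := Finset.mem_filter.mpr ⟨hvS, hv⟩
        have h1 : c₀ ≤ num v / den v := Finset.inf'_le _ hvT
        exact (le_div_iff₀ (hden_pos v hv)).mp h1
    -- the set where the key inequality holds is convex
    have hconv : Convex ℝ {x : Fin N → ℝ | c₀ * den x ≤ num x} := by
      intro x hx' y hy' a b ha hb hab
      simp only [Set.mem_setOf_eq] at hx' hy' ⊢
      have hpt : ∀ i, xstar i - (a • x + b • y) i
          = a * (xstar i - x i) + b * (xstar i - y i) := by
        intro i
        simp only [Pi.add_apply, Pi.smul_apply, smul_eq_mul]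
        linear_combination (- xstar i) * hab
      have hden_le : den (a • x + b • y) ≤ a * den x + b * den y := by
        rw [hdendef]
        calc ∑ i, |xstar i - (a • x + b • y) i|
            ≤ ∑ i, (a * |xstar i - x i| + b * |xstar i - y i|) := by
              apply Finset.sum_le_sum
              intro i _
              rw [hpt i]
              calc |a * (xstar i - x i) + b * (xstar i - y i)|
                  ≤ |a * (xstar i - x i)| + |b * (xstar i - y i)| := abs_add_le _ _
                _ = a * |xstar i - x i| + b * |xstar i - y i| := by
                    rw [abs_mul, abs_mul, abs_of_nonneg ha, abs_of_nonneg hb]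
          _ = a * den x + b * den y := by
              rw [Finset.sum_add_distrib, ← Finset.mul_sum, ← Finset.mul_sum]
      have hnum_eq' : num (a • x + b • y) = a * num x + b * num y := by
        rw [hnumdef]
        simp only
        rw [Finset.mul_sum, Finset.mul_sum, ← Finset.sum_add_distrib]
        apply Finset.sum_congr rfl
        intro i _
        rw [hpt i]
        ring
      calc c₀ * den (a • x + b • y) ≤ c₀ * (a * den x + b * den y) :=
            mul_le_mul_of_nonneg_left hden_le hc₀pos.le
        _ = a * (c₀ * den x) + b * (c₀ * den y) := by ring
        _ ≤ a * num x + b * num y :=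
            add_le_add (mul_le_mul_of_nonneg_left hx' ha)
              (mul_le_mul_of_nonneg_left hy' hb)
        _ = num (a • x + b • y) := hnum_eq'.symm
    have hPC : P ⊆ {x : Fin N → ℝ | c₀ * den x ≤ num x} := by
      rw [hP]; exact convexHull_min keyS hconv
    have hlb : ∀ c ∈ A, c₀ ≤ c := by
      rintro c ⟨x, hxP, hxne, rfl⟩
      have := hPC hxP
      exact (le_div_iff₀ (hden_pos x hxne)).mpr this
    exact lt_of_lt_of_le hc₀pos (le_csInf hAne hlb)
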